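/- (Maximum licensed-user rate, Section 7.) The supremum of R_p over all pairs (R_p,R_c) in the achievable region R_in equals the supremum of logdet(I + G Σ_pnet G†) over all PSD block matrices Σ_pnet = [[Σ_p, Q],[Q†, Σ_cp]] (of size (n_pt+n_ct)×(n_pt+n_ct)) whose diagonal blocks satisfy Tr(Σ_p) ≤ P_p and Tr(Σ_cp) ≤ P_c. -/

import Mathlib

open Matrix Filter
open scoped ComplexOrder

noncomputable section

/-- `Mat m n` : complex `m × n` matrix. -/
abbrev Mat (m n : ℕ) := Matrix (Fin m) (Fin n) ℂ

/-- `LD M = log det (I + M)` (real part of the determinant). -/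
def LD {ι : Type*} [Fintype ι] [DecidableEq ι] (M : Matrix ι ι ℂ) : ℝ :=
  Real.log ((1 + M).det.re)

/-- real trace. -/
def rTr {ι : Type*} [Fintype ι] (M : Matrix ι ι ℂ) : ℝ := M.trace.re

/-- `G = [H_pp  H_cp]`. -/
def Gmat {npt nct npr : ℕ} (Hpp : Mat npr npt) (Hcp : Mat npr nct) :
    Matrix (Fin npr) (Fin npt ⊕ Fin nct) ℂ :=
  fromCols Hpp Hcp

/-- `G_α = [H_pp  H_cp/√α]`. -/
def Galpha {npt nct npr : ℕ} (Hpp : Mat npr npt) (Hcp : Mat npr nct) (α : ℝ) :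
    Matrix (Fin npr) (Fin npt ⊕ Fin nct) ℂ :=
  fromCols Hpp (((Real.sqrt α : ℂ))⁻¹ • Hcp)

/-- The achievable region `R_in`. -/
def Rin {npt nct npr ncr : ℕ} (Hpp : Mat npr npt) (Hcp : Mat npr nct) (Hcc : Mat ncr nct)
    (Pp Pc : ℝ) : Set (ℝ × ℝ) :=
  closure (convexHull ℝ
    {R : ℝ × ℝ | 0 ≤ R.1 ∧ 0 ≤ R.2 ∧
      ∃ (Sp : Mat npt npt) (Scp Scc : Mat nct nct) (Q : Mat npt nct),
        Sp.PosSemidef ∧ Scp.PosSemidef ∧ Scc.PosSemidef ∧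
        (fromBlocks Sp Q Qᴴ Scp).PosSemidef ∧
        rTr Sp ≤ Pp ∧ rTr Scp + rTr Scc ≤ Pc ∧
        R.1 ≤ LD (Gmat Hpp Hcp * fromBlocks Sp Q Qᴴ Scp * (Gmat Hpp Hcp)ᴴ
                  + Hcp * Scc * Hcpᴴ)
              - LD (Hcp * Scc * Hcpᴴ) ∧
        R.2 ≤ LD (Hcc * Scc * Hccᴴ)})

/-- The partial outer bound region `R_part,out^α`. -/
def Rpart {npt nct npr ncr : ℕ} (Hpp : Mat npr npt) (Hcp : Mat npr nct) (Hcc : Mat ncr nct)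
    (Pp Pc : ℝ) (α : ℝ) : Set (ℝ × ℝ) :=
  closure (convexHull ℝ
    {R : ℝ × ℝ | 0 ≤ R.1 ∧ 0 ≤ R.2 ∧
      ∃ (Qp : Matrix (Fin npt ⊕ Fin nct) (Fin npt ⊕ Fin nct) ℂ) (Scc : Mat nct nct),
        Qp.PosSemidef ∧ Scc.PosSemidef ∧
        rTr Qp + rTr Scc ≤ Pp + α * Pc ∧
        R.1 ≤ LD (Galpha Hpp Hcp α * Qp * (Galpha Hpp Hcp α)ᴴ
                  + ((α : ℂ))⁻¹ • (Hcp * Scc * Hcpᴴ))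
              - LD (((α : ℂ))⁻¹ • (Hcp * Scc * Hcpᴴ)) ∧
        R.2 ≤ LD (((α : ℂ))⁻¹ • (Hcc * Scc * Hccᴴ))})

/-- Tuples in `R_ach,rate` (no power constraints). -/
def RachRate {npt nct npr ncr : ℕ} (Hpp : Mat npr npt) (Hcp : Mat npr nct) (Hcc : Mat ncr nct)
    (Rp Rc : ℝ) (Sp : Mat npt npt) (Scp Scc : Mat nct nct) (Q : Mat npt nct) : Prop :=
  0 ≤ Rp ∧ 0 ≤ Rc ∧ Sp.PosSemidef ∧ Scp.PosSemidef ∧ Scc.PosSemidef ∧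
  (fromBlocks Sp Q Qᴴ Scp).PosSemidef ∧
  Rp ≤ LD (Gmat Hpp Hcp * fromBlocks Sp Q Qᴴ Scp * (Gmat Hpp Hcp)ᴴ + Hcp * Scc * Hcpᴴ)
        - LD (Hcp * Scc * Hcpᴴ) ∧
  Rc ≤ LD (Hcc * Scc * Hccᴴ)

/-- The Lagrangian `L`. -/
def Lfun {npt nct : ℕ} (Pp Pc μ Rp Rc : ℝ) (Sp : Mat npt npt) (Scp Scc : Mat nct nct)
    (l1 l2 : ℝ) : ℝ :=
  μ * Rp + Rc - l1 * (rTr Sp - Pp) - l2 * (rTr Scp + rTr Scc - Pc)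

/-- The Lagrangian `L₁`. -/
def L1fun {npt nct : ℕ} (Pp Pc μ Rp Rc : ℝ) (Sp : Mat npt npt) (Scp Scc : Mat nct nct)
    (l α : ℝ) : ℝ :=
  μ * Rp + Rc - l * (rTr Sp + α * rTr Scp + α * rTr Scc - Pp - α * Pc)

/-- `K = [0  H_cc/√α]`. -/
def Kmat (npt : ℕ) {nct ncr : ℕ} (Hcc : Mat ncr nct) (α : ℝ) :
    Matrix (Fin ncr) (Fin npt ⊕ Fin nct) ℂ :=
  fromCols 0 (((Real.sqrt α : ℂ))⁻¹ • Hcc)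

/-- `K̄ = [[H_pp, H_cp/√α],[0, H_cc/√α]]`. -/
def Kbar {npt nct npr ncr : ℕ} (Hpp : Mat npr npt) (Hcp : Mat npr nct) (Hcc : Mat ncr nct)
    (α : ℝ) : Matrix (Fin npr ⊕ Fin ncr) (Fin npt ⊕ Fin nct) ℂ :=
  fromBlocks Hpp (((Real.sqrt α : ℂ))⁻¹ • Hcp) 0 (((Real.sqrt α : ℂ))⁻¹ • Hcc)

/-- The region `R₁^α` (licensed user encoded first). -/
def R1reg {npt nct npr ncr : ℕ} (Hpp : Mat npr npt) (Hcp : Mat npr nct) (Hcc : Mat ncr nct)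
    (Pp Pc : ℝ) (α : ℝ) : Set (ℝ × ℝ) :=
  closure (convexHull ℝ
    {R : ℝ × ℝ | 0 ≤ R.1 ∧ 0 ≤ R.2 ∧
      ∃ Qp Qc : Matrix (Fin npt ⊕ Fin nct) (Fin npt ⊕ Fin nct) ℂ,
        Qp.PosSemidef ∧ Qc.PosSemidef ∧ rTr Qp + rTr Qc ≤ Pp + α * Pc ∧
        R.1 ≤ LD (Galpha Hpp Hcp α * Qp * (Galpha Hpp Hcp α)ᴴ
                  + Galpha Hpp Hcp α * Qc * (Galpha Hpp Hcp α)ᴴ)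
              - LD (Galpha Hpp Hcp α * Qc * (Galpha Hpp Hcp α)ᴴ) ∧
        R.2 ≤ LD (Kmat npt Hcc α * Qc * (Kmat npt Hcc α)ᴴ)})

/-- The region `R₂^α` (cognitive user encoded first). -/
def R2reg {npt nct npr ncr : ℕ} (Hpp : Mat npr npt) (Hcp : Mat npr nct) (Hcc : Mat ncr nct)
    (Pp Pc : ℝ) (α : ℝ) : Set (ℝ × ℝ) :=
  closure (convexHull ℝ
    {R : ℝ × ℝ | 0 ≤ R.1 ∧ 0 ≤ R.2 ∧
      ∃ Qp Qc : Matrix (Fin npt ⊕ Fin nct) (Fin npt ⊕ Fin nct) ℂ,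
        Qp.PosSemidef ∧ Qc.PosSemidef ∧ rTr Qp + rTr Qc ≤ Pp + α * Pc ∧
        R.1 ≤ LD (Galpha Hpp Hcp α * Qp * (Galpha Hpp Hcp α)ᴴ) ∧
        R.2 ≤ LD (Kmat npt Hcc α * Qp * (Kmat npt Hcc α)ᴴ
                  + Kmat npt Hcc α * Qc * (Kmat npt Hcc α)ᴴ)
              - LD (Kmat npt Hcc α * Qp * (Kmat npt Hcc α)ᴴ)})

/-- The dirty-paper-coding region `D^α`. -/
def Dreg {npt nct npr ncr : ℕ} (Hpp : Mat npr npt) (Hcp : Mat npr nct) (Hcc : Mat ncr nct)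
    (Pp Pc : ℝ) (α : ℝ) : Set (ℝ × ℝ) :=
  closure (convexHull ℝ
    (R1reg Hpp Hcp Hcc Pp Pc α ∪ R2reg Hpp Hcp Hcc Pp Pc α))

/-- `Σ_z = [[I, Q_z],[Q_z†, I]]`. -/
def Sigmaz {npr ncr : ℕ} (Qz : Mat npr ncr) :
    Matrix (Fin npr ⊕ Fin ncr) (Fin npr ⊕ Fin ncr) ℂ :=
  fromBlocks 1 Qz Qzᴴ 1

/-- The outer bound region `R_out^{α,Σ_z}`. -/
def Rout {npt nct npr ncr : ℕ} (Hpp : Mat npr npt) (Hcp : Mat npr nct) (Hcc : Mat ncr nct)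
    (Pp Pc : ℝ) (α : ℝ) (Qz : Mat npr ncr) : Set (ℝ × ℝ) :=
  closure (convexHull ℝ
    {R : ℝ × ℝ | 0 ≤ R.1 ∧ 0 ≤ R.2 ∧
      ∃ Qp Qc : Matrix (Fin npt ⊕ Fin nct) (Fin npt ⊕ Fin nct) ℂ,
        Qp.PosSemidef ∧ Qc.PosSemidef ∧ rTr Qp + rTr Qc ≤ Pp + α * Pc ∧
        R.1 ≤ LD (Galpha Hpp Hcp α * Qp * (Galpha Hpp Hcp α)ᴴ
                  + Galpha Hpp Hcp α * Qc * (Galpha Hpp Hcp α)ᴴ)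
              - LD (Galpha Hpp Hcp α * Qc * (Galpha Hpp Hcp α)ᴴ) ∧
        R.2 ≤ Real.log ((Sigmaz Qz + Kbar Hpp Hcp Hcc α * Qc * (Kbar Hpp Hcp Hcc α)ᴴ).det.re)
              - Real.log ((Sigmaz Qz).det.re)})

namespace Aux


variable {ι : Type*} [Fintype ι] [DecidableEq ι]

lemma re_nonneg_of_psd {M : Matrix ι ι ℂ} (hM : M.PosSemidef) (x : ι → ℂ) :
    0 ≤ (dotProduct (star x) (M *ᵥ x)).re := by
  have h := hM.dotProduct_mulVec_nonneg x
  rw [Complex.le_def] at h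
  simpa using h.1

lemma one_le_eigenvalues_one_add {M : Matrix ι ι ℂ} (hM : M.PosSemidef)
    (h1 : (1 + M).IsHermitian) (i : ι) : 1 ≤ h1.eigenvalues i := by
  rw [h1.eigenvalues_eq]
  have hv : dotProduct (star ⇑(h1.eigenvectorBasis i)) ((1 + M) *ᵥ ⇑(h1.eigenvectorBasis i))
      = dotProduct (star ⇑(h1.eigenvectorBasis i)) ⇑(h1.eigenvectorBasis i)
        + dotProduct (star ⇑(h1.eigenvectorBasis i)) (M *ᵥ ⇑(h1.eigenvectorBasis i)) := by
    rw [add_mulVec, one_mulVec, dotProduct_add]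
  rw [hv, map_add]
  have h2 : RCLike.re (dotProduct (star ⇑(h1.eigenvectorBasis i))
      ⇑(h1.eigenvectorBasis i)) = 1 := by
    have horth := h1.eigenvectorBasis.orthonormal.1 i
    have hinner : (inner ℂ (h1.eigenvectorBasis i) (h1.eigenvectorBasis i) : ℂ)
        = dotProduct (star ⇑(h1.eigenvectorBasis i)) ⇑(h1.eigenvectorBasis i) :=
      (EuclideanSpace.inner_eq_star_dotProduct _ _).trans (dotProduct_comm _ _)
    rw [← hinner, inner_self_eq_norm_sq_to_K, horth]
    simp
  have h3 := re_nonneg_of_psd hM ⇑(h1.eigenvectorBasis i)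
  rw [h2]
  simp only [RCLike.re_to_complex] at h3 ⊢
  linarith

/-- `det (1 + M)` is a real number `≥ 1` for `M` PSD. -/
lemma det_one_add_psd {M : Matrix ι ι ℂ} (hM : M.PosSemidef) :
    ∃ r : ℝ, 1 ≤ r ∧ (1 + M).det = (r : ℂ) := by
  have h1 : (1 + M).IsHermitian := Matrix.isHermitian_one.add hM.1
  have hge : (1:ℝ) ≤ ∏ i, h1.eigenvalues i := by
    have := Finset.prod_le_prod (s := Finset.univ) (f := fun _ : ι => (1:ℝ))
      (g := fun i => h1.eigenvalues i) (fun i _ => zero_le_one)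
      (fun i _ => one_le_eigenvalues_one_add hM h1 i)
    simpa using this
  refine ⟨∏ i, h1.eigenvalues i, hge, ?_⟩
  rw [h1.det_eq_prod_eigenvalues]
  push_cast
  rfl

lemma one_le_det_re {M : Matrix ι ι ℂ} (hM : M.PosSemidef) : 1 ≤ (1 + M).det.re := by
  obtain ⟨r, hr, heq⟩ := det_one_add_psd hM
  rw [heq]; simpa using hr

lemma isUnit_det_one_add {M : Matrix ι ι ℂ} (hM : M.PosSemidef) : IsUnit (1 + M).det := by
  obtain ⟨r, hr, heq⟩ := det_one_add_psd hM
  rw [heq]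
  exact isUnit_iff_ne_zero.mpr (by exact_mod_cast (by linarith : r ≠ 0))

lemma inv_psd_one_add {M : Matrix ι ι ℂ} (hM : M.PosSemidef) : (1 + M)⁻¹.PosSemidef := by
  have hpsd : (1 + M).PosSemidef := Matrix.PosSemidef.one.add hM
  have hherm : (1 + M)⁻¹.IsHermitian := hpsd.1.inv
  have := hpsd.conjTranspose_mul_mul_same (1 + M)⁻¹
  rwa [hherm.eq, Matrix.nonsing_inv_mul _ (isUnit_det_one_add hM), one_mul] at this

/-- L3: adding a PSD matrix increases `det (1 + ·)`. -/
lemma det_re_le_det_re_add {P D : Matrix ι ι ℂ} (hP : P.PosSemidef) (hD : D.PosSemidef) :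
    (1 + P).det.re ≤ (1 + (P + D)).det.re := by
  obtain ⟨m, hm, hmeq⟩ := det_one_add_psd hP
  obtain ⟨E, hE⟩ : ∃ E, D = Eᴴ * E := by
    open scoped MatrixOrder in
    exact (CStarAlgebra.nonneg_iff_eq_star_mul_self.mp hD.nonneg).imp fun B h => by
      rwa [Matrix.star_eq_conjTranspose] at h
  have hunit := isUnit_det_one_add hP
  have key : 1 + (P + D) = (1 + P) * (1 + (1 + P)⁻¹ * D) := by
    rw [Matrix.mul_add, Matrix.mul_one, ← Matrix.mul_assoc,
      Matrix.mul_nonsing_inv _ hunit, one_mul, add_assoc]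
  have hF : (E * (1 + P)⁻¹ * Eᴴ).PosSemidef :=
    (inv_psd_one_add hP).mul_mul_conjTranspose_same E
  obtain ⟨f, hf, hfeq⟩ := det_one_add_psd hF
  have hdet2 : (1 + (1 + P)⁻¹ * D).det = (f : ℂ) := by
    rw [hE, ← Matrix.mul_assoc, Matrix.det_one_add_mul_comm, ← hfeq]
    congr 2
    rw [Matrix.mul_assoc]
  calc (1 + P).det.re = m := by rw [hmeq]; simp
    _ ≤ m * f := le_mul_of_one_le_right (by linarith) hf
    _ = (1 + (P + D)).det.re := by
        rw [key, Matrix.det_mul, hmeq, hdet2, ← Complex.ofReal_mul, Complex.ofReal_re]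

/-- L2 : `det (1 + (X + Y)) ≤ det (1 + X) * det (1 + Y)` for PSD `X Y` (real parts). -/
lemma det_re_add_le_mul {X Y : Matrix ι ι ℂ} (hX : X.PosSemidef) (hY : Y.PosSemidef) :
    (1 + (X + Y)).det.re ≤ (1 + X).det.re * (1 + Y).det.re := by
  obtain ⟨nr, hn, hneq⟩ := det_one_add_psd hY
  obtain ⟨B, hB⟩ : ∃ B, X = Bᴴ * B := by
    open scoped MatrixOrder in
    exact (CStarAlgebra.nonneg_iff_eq_star_mul_self.mp hX.nonneg).imp fun B h => by
      rwa [Matrix.star_eq_conjTranspose] at h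
  have hunit := isUnit_det_one_add hY
  set N := 1 + Y with hNdef
  have key : 1 + (X + Y) = N * (1 + N⁻¹ * X) := by
    rw [Matrix.mul_add, Matrix.mul_one, ← Matrix.mul_assoc,
      Matrix.mul_nonsing_inv _ hunit, one_mul]
    rw [hNdef]; abel
  have hNinv := inv_psd_one_add hY
  have hP : (B * N⁻¹ * Bᴴ).PosSemidef := hNinv.mul_mul_conjTranspose_same B
  have hYY : (Y * Y).PosSemidef := by
    have := Matrix.posSemidef_conjTranspose_mul_self Y
    rwa [hY.1.eq] at this
  have h0 : N⁻¹ * Y = 1 - N⁻¹ := by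
    have h := Matrix.nonsing_inv_mul N hunit
    rw [hNdef] at h
    rw [Matrix.mul_add, Matrix.mul_one] at h
    rw [hNdef]
    exact eq_sub_of_add_eq' h
  have h2 : (N⁻¹)ᴴ * (Y + Y * Y) * N⁻¹ = N⁻¹ * Y := by
    have h1 : Y + Y * Y = Y * N := by rw [hNdef, Matrix.mul_add, Matrix.mul_one]
    rw [hNinv.1.eq, h1, ← Matrix.mul_assoc N⁻¹ Y N, Matrix.mul_assoc (N⁻¹ * Y),
      Matrix.mul_nonsing_inv _ hunit, Matrix.mul_one]
  have hsubPSD : (1 - N⁻¹).PosSemidef := by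
    rw [← h0, ← h2]
    exact (hY.add hYY).conjTranspose_mul_mul_same _
  have hD : (B * (1 - N⁻¹) * Bᴴ).PosSemidef := hsubPSD.mul_mul_conjTranspose_same B
  have hPD : B * N⁻¹ * Bᴴ + B * (1 - N⁻¹) * Bᴴ = B * Bᴴ := by
    rw [Matrix.mul_sub, Matrix.mul_one, Matrix.sub_mul]
    abel
  obtain ⟨p, hp, hpeq⟩ := det_one_add_psd hP
  have hdet2 : (1 + N⁻¹ * X).det = (p : ℂ) := by
    rw [hB, ← Matrix.mul_assoc, Matrix.det_one_add_mul_comm, ← hpeq]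
    congr 2
    rw [Matrix.mul_assoc]
  have hstep : p ≤ (1 + X).det.re := by
    have h3 := det_re_le_det_re_add hP hD
    rw [hPD] at h3
    have h4 : (1 + B * Bᴴ).det = (1 + X).det := by
      rw [Matrix.det_one_add_mul_comm, hB]
    rw [h4, hpeq, Complex.ofReal_re] at h3
    exact h3
  have hfin : (1 + (X + Y)).det.re = nr * p := by
    rw [key, Matrix.det_mul, hneq, hdet2, ← Complex.ofReal_mul, Complex.ofReal_re]
  rw [hfin, hneq, Complex.ofReal_re, mul_comm]
  exact mul_le_mul_of_nonneg_right hstep (by linarith)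


variable {ι : Type*} [Fintype ι] [DecidableEq ι]

lemma LD_nonneg {M : Matrix ι ι ℂ} (hM : M.PosSemidef) : 0 ≤ LD M :=
  Real.log_nonneg (one_le_det_re hM)

lemma LD_zero : LD (0 : Matrix ι ι ℂ) = 0 := by
  simp [LD]

lemma LD_sub_le {X Y : Matrix ι ι ℂ} (hX : X.PosSemidef) (hY : Y.PosSemidef) :
    LD (X + Y) - LD Y ≤ LD X := by
  have hXY := hX.add hY
  have h1 : (0:ℝ) < (1 + (X + Y)).det.re := zero_lt_one.trans_le (one_le_det_re hXY)
  have h2 : (0:ℝ) < (1 + X).det.re := zero_lt_one.trans_le (one_le_det_re hX)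
  have h3 : (0:ℝ) < (1 + Y).det.re := zero_lt_one.trans_le (one_le_det_re hY)
  have hlog : Real.log ((1 + (X + Y)).det.re)
      ≤ Real.log ((1 + X).det.re * (1 + Y).det.re) :=
    Real.log_le_log h1 (det_re_add_le_mul hX hY)
  rw [Real.log_mul h2.ne' h3.ne'] at hlog
  simp only [LD]
  linarith

lemma diag_re_nonneg {M : Matrix ι ι ℂ} (hM : M.PosSemidef) (i : ι) : 0 ≤ (M i i).re := by
  have h2 := hM.dotProduct_mulVec_nonneg (Pi.single i 1)
  have h4 : dotProduct (star (Pi.single i 1)) (M *ᵥ Pi.single i 1) = M i i := by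
    simp [Matrix.mulVec_single, dotProduct, Pi.single_apply, apply_ite]
  rw [h4, Complex.le_def] at h2
  simpa using h2.1

lemma rTr_nonneg {M : Matrix ι ι ℂ} (hM : M.PosSemidef) : 0 ≤ rTr M := by
  have h : rTr M = ∑ i, (M i i).re := by
    simp [rTr, Matrix.trace, Matrix.diag, Complex.re_sum]
  rw [h]
  exact Finset.sum_nonneg fun i _ => diag_re_nonneg hM i

lemma rTr_zero : rTr (0 : Matrix ι ι ℂ) = 0 := by simp [rTr]

end Aux

theorem statement15 {npt nct npr ncr : ℕ}
    (hnpt : 0 < npt) (hnct : 0 < nct) (hnpr : 0 < npr) (hncr : 0 < ncr)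
    (Hpp : Mat npr npt) (Hcp : Mat npr nct) (Hcc : Mat ncr nct)
    (Pp Pc : ℝ) (hPp : 0 < Pp) (hPc : 0 < Pc) :
    (⨆ R ∈ Rin Hpp Hcp Hcc Pp Pc, ((R.1 : ℝ) : EReal)) =
      ⨆ S ∈ {S : Matrix (Fin npt ⊕ Fin nct) (Fin npt ⊕ Fin nct) ℂ |
          S.PosSemidef ∧ rTr S.toBlocks₁₁ ≤ Pp ∧ rTr S.toBlocks₂₂ ≤ Pc},
        ((LD (Gmat Hpp Hcp * S * (Gmat Hpp Hcp)ᴴ) : ℝ) : EReal) := by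
  classical
  set 𝒮 : Set (Matrix (Fin npt ⊕ Fin nct) (Fin npt ⊕ Fin nct) ℂ) :=
    {S : Matrix (Fin npt ⊕ Fin nct) (Fin npt ⊕ Fin nct) ℂ |
      S.PosSemidef ∧ rTr S.toBlocks₁₁ ≤ Pp ∧ rTr S.toBlocks₂₂ ≤ Pc} with h𝒮
  set c : EReal := ⨆ S ∈ 𝒮, ((LD (Gmat Hpp Hcp * S * (Gmat Hpp Hcp)ᴴ) : ℝ) : EReal) with hc
  have hmem0 : (0 : Matrix (Fin npt ⊕ Fin nct) (Fin npt ⊕ Fin nct) ℂ) ∈ 𝒮 := by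
    have e1 : ((0 : Matrix (Fin npt ⊕ Fin nct) (Fin npt ⊕ Fin nct) ℂ)).toBlocks₁₁
        = (0 : Mat npt npt) := rfl
    have e2 : ((0 : Matrix (Fin npt ⊕ Fin nct) (Fin npt ⊕ Fin nct) ℂ)).toBlocks₂₂
        = (0 : Mat nct nct) := rfl
    exact ⟨Matrix.PosSemidef.zero, by rw [e1, Aux.rTr_zero]; exact hPp.le,
      by rw [e2, Aux.rTr_zero]; exact hPc.le⟩
  have hc0 : (0 : EReal) ≤ c := by
    have hval : LD (Gmat Hpp Hcp * (0 : Matrix (Fin npt ⊕ Fin nct) (Fin npt ⊕ Fin nct) ℂ)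
        * (Gmat Hpp Hcp)ᴴ) = 0 := by
      rw [Matrix.mul_zero, Matrix.zero_mul, Aux.LD_zero]
    have hle := le_iSup₂ (f := fun S (_ : S ∈ 𝒮) =>
      ((LD (Gmat Hpp Hcp * S * (Gmat Hpp Hcp)ᴴ) : ℝ) : EReal)) 0 hmem0
    rw [hval] at hle
    simpa using hle
  have hpt : ∀ p : ℝ × ℝ, (0 ≤ p.1 ∧ 0 ≤ p.2 ∧
      ∃ (Sp : Mat npt npt) (Scp Scc : Mat nct nct) (Q : Mat npt nct),
        Sp.PosSemidef ∧ Scp.PosSemidef ∧ Scc.PosSemidef ∧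
        (fromBlocks Sp Q Qᴴ Scp).PosSemidef ∧
        rTr Sp ≤ Pp ∧ rTr Scp + rTr Scc ≤ Pc ∧
        p.1 ≤ LD (Gmat Hpp Hcp * fromBlocks Sp Q Qᴴ Scp * (Gmat Hpp Hcp)ᴴ + Hcp * Scc * Hcpᴴ)
              - LD (Hcp * Scc * Hcpᴴ) ∧
        p.2 ≤ LD (Hcc * Scc * Hccᴴ)) → ((p.1 : ℝ) : EReal) ≤ c := by
    rintro p ⟨hx, hy, Sp, Scp, Scc, Q, hSp, hScp, hScc, hblk, htp, htc, hR1, hR2⟩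
    have hX : (Gmat Hpp Hcp * fromBlocks Sp Q Qᴴ Scp * (Gmat Hpp Hcp)ᴴ).PosSemidef :=
      hblk.mul_mul_conjTranspose_same _
    have hY : (Hcp * Scc * Hcpᴴ).PosSemidef := hScc.mul_mul_conjTranspose_same _
    have hxle : p.1 ≤ LD (Gmat Hpp Hcp * fromBlocks Sp Q Qᴴ Scp * (Gmat Hpp Hcp)ᴴ) :=
      hR1.trans (Aux.LD_sub_le hX hY)
    have hmem : fromBlocks Sp Q Qᴴ Scp ∈ 𝒮 := by
      refine ⟨hblk, ?_, ?_⟩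
      · rw [Matrix.toBlocks_fromBlocks₁₁]; exact htp
      · rw [Matrix.toBlocks_fromBlocks₂₂]
        have := Aux.rTr_nonneg hScc
        linarith
    calc ((p.1 : ℝ) : EReal)
        ≤ ((LD (Gmat Hpp Hcp * fromBlocks Sp Q Qᴴ Scp * (Gmat Hpp Hcp)ᴴ) : ℝ) : EReal) :=
          EReal.coe_le_coe_iff.mpr hxle
      _ ≤ c := le_iSup₂ (f := fun S (_ : S ∈ 𝒮) =>
          ((LD (Gmat Hpp Hcp * S * (Gmat Hpp Hcp)ᴴ) : ℝ) : EReal)) _ hmem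
  apply le_antisymm
  · by_cases htop : c = ⊤
    · rw [htop]; exact le_top
    · have hbot : c ≠ ⊥ := by
        intro h
        rw [h] at hc0
        simp at hc0
      have hcr : ((c.toReal : ℝ) : EReal) = c := EReal.coe_toReal htop hbot
      refine iSup₂_le fun R hR => ?_
      have hsub : Rin Hpp Hcp Hcc Pp Pc ⊆ {q : ℝ × ℝ | q.1 ≤ c.toReal} := by
        show closure _ ⊆ _
        refine closure_minimal (convexHull_min ?_ ?_)
          (isClosed_le continuous_fst continuous_const)
        · intro q hq
          have h1 := hpt q hq
          rw [← hcr] at h1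
          exact EReal.coe_le_coe_iff.mp h1
        · exact convex_halfSpace_le ⟨fun a b => rfl, fun r a => rfl⟩ _
      have hRr := hsub hR
      calc ((R.1 : ℝ) : EReal) ≤ ((c.toReal : ℝ) : EReal) := EReal.coe_le_coe_iff.mpr hRr
        _ = c := hcr
  · refine iSup₂_le fun S hS => ?_
    obtain ⟨hSpsd, h1, h2⟩ := hS
    have hQH : (S.toBlocks₁₂)ᴴ = S.toBlocks₂₁ := by
      ext i j
      have h3 := congrFun (congrFun hSpsd.1 (Sum.inr i)) (Sum.inl j)
      simpa [Matrix.conjTranspose_apply, Matrix.toBlocks₁₂, Matrix.toBlocks₂₁] using h3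
    have hfb : fromBlocks S.toBlocks₁₁ S.toBlocks₁₂ (S.toBlocks₁₂)ᴴ S.toBlocks₂₂ = S := by
      rw [hQH]; exact Matrix.fromBlocks_toBlocks S
    have hGS : (Gmat Hpp Hcp * S * (Gmat Hpp Hcp)ᴴ).PosSemidef :=
      hSpsd.mul_mul_conjTranspose_same _
    have hpA : ((LD (Gmat Hpp Hcp * S * (Gmat Hpp Hcp)ᴴ), (0:ℝ)) : ℝ × ℝ) ∈
        {R : ℝ × ℝ | 0 ≤ R.1 ∧ 0 ≤ R.2 ∧
          ∃ (Sp : Mat npt npt) (Scp Scc : Mat nct nct) (Q : Mat npt nct),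
            Sp.PosSemidef ∧ Scp.PosSemidef ∧ Scc.PosSemidef ∧
            (fromBlocks Sp Q Qᴴ Scp).PosSemidef ∧
            rTr Sp ≤ Pp ∧ rTr Scp + rTr Scc ≤ Pc ∧
            R.1 ≤ LD (Gmat Hpp Hcp * fromBlocks Sp Q Qᴴ Scp * (Gmat Hpp Hcp)ᴴ
                      + Hcp * Scc * Hcpᴴ)
                  - LD (Hcp * Scc * Hcpᴴ) ∧
            R.2 ≤ LD (Hcc * Scc * Hccᴴ)} := by
      refine ⟨Aux.LD_nonneg hGS, le_refl 0, S.toBlocks₁₁, S.toBlocks₂₂, 0, S.toBlocks₁₂,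
        hSpsd.submatrix Sum.inl, hSpsd.submatrix Sum.inr, Matrix.PosSemidef.zero,
        ?_, h1, ?_, ?_, ?_⟩
      · rw [hfb]; exact hSpsd
      · rw [Aux.rTr_zero]; simpa using h2
      · show LD (Gmat Hpp Hcp * S * (Gmat Hpp Hcp)ᴴ)
            ≤ LD (Gmat Hpp Hcp * fromBlocks S.toBlocks₁₁ S.toBlocks₁₂ (S.toBlocks₁₂)ᴴ
                    S.toBlocks₂₂ * (Gmat Hpp Hcp)ᴴ + Hcp * 0 * Hcpᴴ)
                - LD (Hcp * 0 * Hcpᴴ)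
        rw [hfb, Matrix.mul_zero, Matrix.zero_mul, add_zero, Aux.LD_zero, sub_zero]
      · show (0:ℝ) ≤ LD (Hcc * 0 * Hccᴴ)
        rw [Matrix.mul_zero, Matrix.zero_mul, Aux.LD_zero]
    have hmemRin : ((LD (Gmat Hpp Hcp * S * (Gmat Hpp Hcp)ᴴ), (0:ℝ)) : ℝ × ℝ) ∈
        Rin Hpp Hcp Hcc Pp Pc :=
      subset_closure (subset_convexHull ℝ _ hpA)
    exact le_iSup₂_of_le ((LD (Gmat Hpp Hcp * S * (Gmat Hpp Hcp)ᴴ), (0:ℝ)) : ℝ × ℝ)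
      hmemRin (le_refl _)


end
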